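/- Let 0 ≤ A < B < C with √(B−A)/√(C−B) ∈ (0,1). The expression m(A) = −(B² + B√(B−A)√(C−B) − C(A + √(B−A)√(C−B)))/(A − 2B + C) is (weakly) decreasing as a function of A on the region where these constraints hold. -/

import Mathlib

theorem stmt_15 (B C : ℝ)
    (m : ℝ → ℝ)
    (hm : ∀ A, m A = -(B ^ 2 + B * Real.sqrt (B - A) * Real.sqrt (C - B)
        - C * (A + Real.sqrt (B - A) * Real.sqrt (C - B))) / (A - 2 * B + C)) :
    ∀ A₁ A₂ : ℝ, 0 ≤ A₁ → A₁ ≤ A₂ → A₂ < B → B < C →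
      Real.sqrt (B - A₁) / Real.sqrt (C - B) < 1 →
      Real.sqrt (B - A₂) / Real.sqrt (C - B) < 1 →
      m A₂ ≤ m A₁ := by
  intro A₁ A₂ h0 h12 h2B hBC h1 h2
  set s := Real.sqrt (C - B) with hsdef
  set t₁ := Real.sqrt (B - A₁) with ht1def
  set t₂ := Real.sqrt (B - A₂) with ht2def
  have hs : 0 < s := Real.sqrt_pos.2 (by linarith)
  have hs2 : s ^ 2 = C - B := Real.sq_sqrt (by linarith)
  have ht1 : t₁ ^ 2 = B - A₁ := Real.sq_sqrt (by linarith)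
  have ht2 : t₂ ^ 2 = B - A₂ := Real.sq_sqrt (by linarith)
  have ht1n : 0 ≤ t₁ := Real.sqrt_nonneg _
  have ht2n : 0 ≤ t₂ := Real.sqrt_nonneg _
  have h1' : t₁ < s := by rwa [div_lt_one hs] at h1
  have h2' : t₂ < s := by rwa [div_lt_one hs] at h2
  have hle : t₂ ≤ t₁ := Real.sqrt_le_sqrt (by linarith)
  have hA1 : A₁ = B - t₁ ^ 2 := by linarith
  have hA2 : A₂ = B - t₂ ^ 2 := by linarith
  have hC : C = B + s ^ 2 := by linarith
  have e1 : m A₁ = B + s ^ 2 * t₁ / (s + t₁) := by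
    rw [hm, hA1, hC]
    have hd : B - t₁ ^ 2 - 2 * B + (B + s ^ 2) ≠ 0 := by nlinarith
    have hst : s + t₁ ≠ 0 := by positivity
    rw [show Real.sqrt (B - (B - t₁ ^ 2)) = t₁ by rw [sub_sub_cancel, Real.sqrt_sq ht1n]]
    rw [div_eq_iff hd, add_div' _ _ _ hst, div_mul_eq_mul_div, eq_div_iff hst]
    ring
  have e2 : m A₂ = B + s ^ 2 * t₂ / (s + t₂) := by
    rw [hm, hA2, hC]
    have hd : B - t₂ ^ 2 - 2 * B + (B + s ^ 2) ≠ 0 := by nlinarith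
    have hst : s + t₂ ≠ 0 := by positivity
    rw [show Real.sqrt (B - (B - t₂ ^ 2)) = t₂ by rw [sub_sub_cancel, Real.sqrt_sq ht2n]]
    rw [div_eq_iff hd, add_div' _ _ _ hst, div_mul_eq_mul_div, eq_div_iff hst]
    ring
  rw [e1, e2]
  have h1p : 0 < s + t₁ := by linarith
  have h2p : 0 < s + t₂ := by linarith
  have : s ^ 2 * t₂ / (s + t₂) ≤ s ^ 2 * t₁ / (s + t₁) := by
    rw [div_le_div_iff₀ h2p h1p]
    nlinarith [sq_nonneg s, mul_nonneg (mul_nonneg (le_of_lt hs) (le_of_lt hs)) (sub_nonneg.2 hle)]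
  linarith
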